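/- arXiv:1403.1630 — 5 statements merged into one kernel-verified Lean document; each statement's English description precedes it below -/
import Mathlib

section
/- For any function f of bounded variation on [0,1] that is symmetric around 1/2 (i.e., f(1/2 - y) = f(1/2 + y) for all y in [0,1/2]), and for any points x_1, ..., x_N in [0,1], we have |∫_0^1 f(x) dx - (1/N) Σ_{k=1}^N f(x_k)| ≤ (Var f / 2) · D_N(x_1, ..., x_N). -/
open MeasureTheory Set
open scoped ENNReal

/-- The extremal discrepancy of points `x 0, …, x (N-1)`. -/
noncomputable def discrepancy {N : ℕ} (x : Fin N → ℝ) : ℝ :=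
  ⨆ p : {p : ℝ × ℝ // 0 ≤ p.1 ∧ p.1 ≤ p.2 ∧ p.2 ≤ 1},
    |(∑ k, if x k ∈ Icc p.val.1 p.val.2 then (1:ℝ) else 0) / N - (p.val.2 - p.val.1)|

section Helpers

variable {N : ℕ}

open scoped Classical

lemma cnt_nonneg (x : Fin N → ℝ) (S : Set ℝ) [DecidablePred (· ∈ S)] :
    0 ≤ ∑ k, if x k ∈ S then (1:ℝ) else 0 :=
  Finset.sum_nonneg fun _ _ => by split <;> norm_num

lemma cnt_le_card (x : Fin N → ℝ) (S : Set ℝ) [DecidablePred (· ∈ S)] :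
    (∑ k, if x k ∈ S then (1:ℝ) else 0) ≤ N := by
  calc (∑ k, if x k ∈ S then (1:ℝ) else 0) ≤ ∑ _k : Fin N, (1:ℝ) :=
        Finset.sum_le_sum fun _ _ => by split <;> norm_num
    _ = N := by simp

lemma cnt_mono (x : Fin N → ℝ) {S T : Set ℝ} [DecidablePred (· ∈ S)] [DecidablePred (· ∈ T)]
    (h : ∀ k, x k ∈ S → x k ∈ T) :
    (∑ k, if x k ∈ S then (1:ℝ) else 0) ≤ ∑ k, if x k ∈ T then (1:ℝ) else 0 := by
  refine Finset.sum_le_sum fun k _ => ?_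
  by_cases hk : x k ∈ S
  · simp [hk, h k hk]
  · simp only [hk, if_false]; split <;> norm_num

lemma disc_bddAbove (hN : 0 < N) (x : Fin N → ℝ) :
    BddAbove (range fun p : {p : ℝ × ℝ // 0 ≤ p.1 ∧ p.1 ≤ p.2 ∧ p.2 ≤ 1} =>
      |(∑ k, if x k ∈ Icc p.val.1 p.val.2 then (1:ℝ) else 0) / N - (p.val.2 - p.val.1)|) := by
  refine ⟨2, ?_⟩
  rintro _ ⟨p, rfl⟩
  have hNpos : (0:ℝ) < N := by exact_mod_cast hN
  have h1 : (∑ k, if x k ∈ Icc p.val.1 p.val.2 then (1:ℝ) else 0) / N ≤ 1 := by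
    rw [div_le_one hNpos]; exact cnt_le_card x _
  have h2 : 0 ≤ (∑ k, if x k ∈ Icc p.val.1 p.val.2 then (1:ℝ) else 0) / N :=
    div_nonneg (cnt_nonneg x _) hNpos.le
  have h3 : 0 ≤ p.val.2 - p.val.1 := sub_nonneg.2 p.prop.2.1
  have h4 : p.val.2 - p.val.1 ≤ 1 := by
    have := p.prop.1; have := p.prop.2.2; linarith
  rw [abs_le]; constructor <;> linarith

lemma le_disc (hN : 0 < N) (x : Fin N → ℝ) {a b : ℝ}
    (h0 : 0 ≤ a) (hab : a ≤ b) (hb1 : b ≤ 1) :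
    |(∑ k, if x k ∈ Icc a b then (1:ℝ) else 0) / N - (b - a)| ≤ discrepancy x :=
  le_ciSup (disc_bddAbove hN x) ⟨(a, b), ⟨h0, hab, hb1⟩⟩

lemma disc_nonneg (hN : 0 < N) (x : Fin N → ℝ) : 0 ≤ discrepancy x :=
  le_trans (abs_nonneg _) (le_disc hN x le_rfl le_rfl zero_le_one)

lemma mem_m (t : ℝ) : min 1 |2*t-1| ∈ Icc (0:ℝ) 1 :=
  ⟨le_min zero_le_one (abs_nonneg _), min_le_left _ _⟩

lemma m_eq_abs {t : ℝ} (ht : t ∈ Icc (0:ℝ) 1) : min 1 |2*t-1| = |2*t-1| :=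
  min_eq_right (abs_le.2 ⟨by linarith [ht.1], by linarith [ht.2]⟩)

lemma meas_m : Measurable fun t : ℝ => min 1 |2*t-1| := by
  have h2 : Continuous fun t : ℝ => 2*t-1 :=
    (continuous_const.mul continuous_id).sub continuous_const
  exact (continuous_const.min (continuous_abs.comp h2)).measurable

/-- The key pointwise level-set estimate. -/
lemma level_claim (hN : 0 < N) {G : ℝ → ℝ} (hG : Monotone G)
    (x : Fin N → ℝ) (hx : ∀ k, x k ∈ Icc (0:ℝ) 1) (s : ℝ) :
    |(volume ({t : ℝ | s ≤ G (min 1 |2*t-1|) - G 0} ∩ Icc 0 1)).toReal -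
      (∑ k, if x k ∈ {t : ℝ | s ≤ G (min 1 |2*t-1|) - G 0} then (1:ℝ) else 0) / N| ≤
      discrepancy x := by
  have hNpos : (0:ℝ) < N := by exact_mod_cast hN
  have hD0 := disc_nonneg hN x
  set A : Set ℝ := {t : ℝ | s ≤ G (min 1 |2*t-1|) - G 0} with hA
  change |(volume (A ∩ Icc 0 1)).toReal -
      (∑ k, if x k ∈ A then (1:ℝ) else 0) / (N:ℝ)| ≤ discrepancy x
  set E : Set ℝ := {u | u ∈ Icc (0:ℝ) 1 ∧ s ≤ G u - G 0} with hEdef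
  have hmem : ∀ t : ℝ, t ∈ A ↔ min 1 |2*t-1| ∈ E := by
    intro t
    simp only [hA, hEdef, mem_setOf_eq]
    exact ⟨fun h => ⟨mem_m t, h⟩, fun h => h.2⟩
  rcases eq_empty_or_nonempty E with hE | hE
  · have hA0 : A = ∅ := by
      ext t; simp only [mem_empty_iff_false, iff_false]
      intro ht
      exact absurd ((hmem t).1 ht) (by simp [hE])
    have hAv : volume (A ∩ Icc 0 1) = 0 := by rw [hA0]; simp
    have h1 : (∑ k, if x k ∈ A then (1:ℝ) else 0) = 0 :=
      Finset.sum_eq_zero fun k _ => by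
        simp only [ite_eq_right_iff]
        intro hk
        exact absurd ((hmem (x k)).1 hk) (by simp [hE])
    rw [hAv, h1]
    simpa using disc_nonneg hN x
  · set a := sInf E with ha
    have hEbdd : BddBelow E := ⟨0, fun u hu => hu.1.1⟩
    have ha0 : 0 ≤ a := le_csInf hE fun u hu => hu.1.1
    have ha1 : a ≤ 1 := by
      obtain ⟨e, he⟩ := hE
      exact (csInf_le hEbdd he).trans he.1.2
    have fact1 : ∀ u, u ∈ Icc (0:ℝ) 1 → a < u → u ∈ E := by
      intro u hu hau
      obtain ⟨e, heE, heu⟩ := exists_lt_of_csInf_lt hE hau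
      exact ⟨hu, le_trans heE.2 (sub_le_sub_right (hG heu.le) _)⟩
    have fact2 : ∀ u, u ∈ E → a ≤ u := fun u hu => csInf_le hEbdd hu
    set l : ℝ := 1/2 - a/2 with hl
    set r : ℝ := 1/2 + a/2 with hr
    have hrl : r - l = a := by rw [hl, hr]; ring
    have h0l : 0 ≤ l := by rw [hl]; linarith
    have hlr : l ≤ r := by rw [hl, hr]; linarith
    have hr1 : r ≤ 1 := by rw [hr]; linarith
    have mem1 : ∀ t, t ∈ Icc (0:ℝ) 1 → t ∉ Icc l r → t ∈ A := by
      intro t ht htlr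
      refine (hmem t).2 (fact1 _ (mem_m t) ?_)
      rw [m_eq_abs ht]
      rcases not_and_or.mp htlr with h | h
      · push_neg at h
        have : -(2*t-1) > a := by rw [hl] at h; linarith
        exact lt_of_lt_of_le this (neg_le_abs _)
      · push_neg at h
        have : 2*t-1 > a := by rw [hr] at h; linarith
        exact lt_of_lt_of_le this (le_abs_self _)
    have mem2 : ∀ t, t ∈ Icc (0:ℝ) 1 → t ∈ A → t ∉ Ioo l r := by
      intro t ht htA hIoo
      have h1 : a ≤ min 1 |2*t-1| := fact2 _ ((hmem t).1 htA)
      rw [m_eq_abs ht] at h1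
      have h2 : |2*t-1| < a := by
        rw [abs_lt]
        constructor
        · rw [hl] at hIoo; have := hIoo.1; linarith
        · rw [hr] at hIoo; have := hIoo.2; linarith
      linarith
    have hvol : volume (A ∩ Icc 0 1) = ENNReal.ofReal (1 - a) := by
      have sub1 : Icc (0:ℝ) 1 \ Icc l r ⊆ A ∩ Icc 0 1 := fun t ⟨ht, hlt⟩ => ⟨mem1 t ht hlt, ht⟩
      have sub2 : A ∩ Icc 0 1 ⊆ Icc (0:ℝ) 1 \ Ioo l r := fun t ⟨htA, ht⟩ => ⟨ht, mem2 t ht htA⟩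
      have v1 : volume (Icc (0:ℝ) 1 \ Icc l r) = ENNReal.ofReal (1 - a) := by
        rw [measure_diff (Icc_subset_Icc h0l hr1) measurableSet_Icc.nullMeasurableSet
            (by rw [Real.volume_Icc]; exact ENNReal.ofReal_ne_top),
          Real.volume_Icc, Real.volume_Icc, hrl, ← ENNReal.ofReal_sub _ ha0]
        norm_num
      have v2 : volume (Icc (0:ℝ) 1 \ Ioo l r) = ENNReal.ofReal (1 - a) := by
        rw [measure_diff (Ioo_subset_Icc_self.trans (Icc_subset_Icc h0l hr1))
            measurableSet_Ioo.nullMeasurableSet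
            (by rw [Real.volume_Ioo]; exact ENNReal.ofReal_ne_top),
          Real.volume_Ioo, Real.volume_Icc, hrl, ← ENNReal.ofReal_sub _ ha0]
        norm_num
      exact le_antisymm (v2 ▸ measure_mono sub2) (v1 ▸ measure_mono sub1)
    rw [hvol, ENNReal.toReal_ofReal (by linarith)]
    set c : ℝ := ∑ k, if x k ∈ A then (1:ℝ) else 0 with hc
    set cIcc : ℝ := ∑ k, if x k ∈ Icc l r then (1:ℝ) else 0 with hcIcc
    set cIoo : ℝ := ∑ k, if x k ∈ Ioo l r then (1:ℝ) else 0 with hcIoo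
    have hNsum : (N:ℝ) = ∑ _k : Fin N, (1:ℝ) := by simp
    have hclo : (N:ℝ) - cIcc ≤ c := by
      rw [hc, hcIcc, hNsum, ← Finset.sum_sub_distrib]
      refine Finset.sum_le_sum fun k _ => ?_
      by_cases hk : x k ∈ Icc l r
      · simp only [hk, if_true]
        split <;> norm_num
      · simp [hk, mem1 (x k) (hx k) hk]
    have hchi : c ≤ (N:ℝ) - cIoo := by
      rw [hc, hcIoo, hNsum, ← Finset.sum_sub_distrib]
      refine Finset.sum_le_sum fun k _ => ?_
      by_cases hk : x k ∈ A
      · simp [hk, mem2 (x k) (hx k) hk]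
      · simp only [hk, if_false]
        split <;> norm_num
    have hdIcc := le_disc hN x h0l hlr hr1
    rw [← hcIcc, hrl] at hdIcc
    have key : a - cIoo / N ≤ discrepancy x := by
      by_contra hcon
      push_neg at hcon
      set ε : ℝ := (a - cIoo / N - discrepancy x) / 2 with hε
      have hεpos : 0 < ε := by rw [hε]; linarith
      have hstep : a - cIoo / N ≤ discrepancy x + ε := by
        rcases le_or_gt a ε with h | h
        · have : 0 ≤ cIoo / N := div_nonneg (cnt_nonneg x _) hNpos.le
          linarith
        · have hd := le_disc hN x (a := l + ε/2) (b := r - ε/2)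
            (by linarith) (by rw [hl, hr]; linarith) (by linarith)
          have hlen : (r - ε/2) - (l + ε/2) = a - ε := by rw [hl, hr]; ring
          rw [hlen] at hd
          have h1 := (abs_le.mp hd).1
          have hsub : (∑ k, if x k ∈ Icc (l + ε/2) (r - ε/2) then (1:ℝ) else 0) ≤ cIoo := by
            rw [hcIoo]
            exact cnt_mono x fun k hk =>
              Set.Icc_subset_Ioo (by linarith) (by linarith) hk
          have h2 : ((∑ k, if x k ∈ Icc (l + ε/2) (r - ε/2) then (1:ℝ) else 0) : ℝ) / N
              ≤ cIoo / N := by gcongr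
          linarith
      rw [hε] at hstep
      linarith
    have hdiv1 : ((N:ℝ) - cIcc) / N = 1 - cIcc / N := by
      field_simp
    have hdiv2 : ((N:ℝ) - cIoo) / N = 1 - cIoo / N := by
      field_simp
    have habs1 := (abs_le.mp hdIcc).2
    have hlo : (1 - a) - c / N ≤ discrepancy x := by
      have : ((N:ℝ) - cIcc) / N ≤ c / N := by gcongr
      rw [hdiv1] at this
      linarith
    have hhi : c / N - (1 - a) ≤ discrepancy x := by
      have : c / N ≤ ((N:ℝ) - cIoo) / N := by gcongr
      rw [hdiv2] at this
      linarith
    rw [abs_le]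
    constructor <;> linarith

lemma bounded_integrable {G : ℝ → ℝ} (hG : Monotone G) (μ : Measure ℝ)
    [IsFiniteMeasure μ] :
    Integrable (fun t => G (min 1 |2*t-1|) - G 0) μ := by
  have hmeas : Measurable fun t : ℝ => G (min 1 |2*t-1|) - G 0 :=
    (hG.measurable.comp meas_m).sub measurable_const
  refine Integrable.mono' (integrable_const (G 1 - G 0)) hmeas.aestronglyMeasurable
    (ae_of_all _ fun t => ?_)
  have h0 : G 0 ≤ G (min 1 |2*t-1|) := hG (mem_m t).1
  have h1 : G (min 1 |2*t-1|) ≤ G 1 := hG (mem_m t).2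
  rw [Real.norm_eq_abs, abs_of_nonneg (by linarith)]
  linarith

/-- Koksma-type inequality for a monotone function composed with the tent map. -/
lemma mono_koksma (hN : 0 < N) {G : ℝ → ℝ} (hG : Monotone G)
    (x : Fin N → ℝ) (hx : ∀ k, x k ∈ Icc (0:ℝ) 1) :
    |(∫ t in (0:ℝ)..1, G (min 1 |2*t-1|)) - (∑ k, G (min 1 |2*(x k)-1|)) / N| ≤
      (G 1 - G 0) * discrepancy x := by
  classical
  have hNpos : (0:ℝ) < N := by exact_mod_cast hN
  set ψ : ℝ → ℝ := fun t => G (min 1 |2*t-1|) - G 0 with hψ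
  have hψmeas : Measurable ψ := (hG.measurable.comp meas_m).sub measurable_const
  have hψ0 : ∀ t, 0 ≤ ψ t := fun t => sub_nonneg.2 (hG (mem_m t).1)
  have hψM : ∀ t, ψ t ≤ G 1 - G 0 := fun t => sub_le_sub_right (hG (mem_m t).2) _
  have hM0 : 0 ≤ G 1 - G 0 := sub_nonneg.2 (hG zero_le_one)
  set M : ℝ := G 1 - G 0 with hM
  set μ1 : Measure ℝ := volume.restrict (Icc 0 1) with hμ1
  set μ2 : Measure ℝ := ∑ k : Fin N, Measure.dirac (x k) with hμ2
  haveI : IsFiniteMeasure μ1 := ⟨by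
    rw [hμ1, Measure.restrict_apply_univ, Real.volume_Icc]; exact ENNReal.ofReal_lt_top⟩
  haveI : IsFiniteMeasure μ2 := ⟨by
    rw [hμ2, Measure.finset_sum_apply]
    simp⟩
  have hint1 : Integrable ψ μ1 := bounded_integrable hG μ1
  have hint2 : Integrable ψ μ2 := integrable_finset_sum_measure.2
    fun k _ => bounded_integrable hG _
  have lc1 := hint1.integral_eq_integral_Ioc_meas_le (M := M)
    (ae_of_all _ hψ0) (ae_of_all _ hψM)
  have lc2 := hint2.integral_eq_integral_Ioc_meas_le (M := M)
    (ae_of_all _ hψ0) (ae_of_all _ hψM)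
  have e1 : ∫ t in (0:ℝ)..1, G (min 1 |2*t-1|) = (∫ ω, ψ ω ∂μ1) + G 0 := by
    rw [intervalIntegral.integral_of_le zero_le_one, ← integral_Icc_eq_integral_Ioc, ← hμ1]
    rw [show (fun t => G (min 1 |2*t-1|)) = fun t => ψ t + G 0 from funext fun t => by
      rw [hψ]; ring]
    rw [integral_add hint1 (integrable_const _), integral_const]
    rw [hμ1, measureReal_restrict_apply_univ, Measure.real, Real.volume_Icc]
    norm_num
  have e2 : (∑ k, G (min 1 |2*(x k)-1|)) = (∫ ω, ψ ω ∂μ2) + N * G 0 := by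
    have h1 : (∑ k, G (min 1 |2*(x k)-1|)) = (∑ k, ψ (x k)) + N * G 0 := by
      rw [hψ, Finset.sum_sub_distrib, Finset.sum_const, Finset.card_univ]
      simp [nsmul_eq_mul]
    rw [h1, hμ2, integral_finset_sum_measure (fun k _ => bounded_integrable hG _)]
    congr 1
    exact Finset.sum_congr rfl fun k _ => (integral_dirac ψ (x k)).symm
  have ediff : (∫ t in (0:ℝ)..1, G (min 1 |2*t-1|)) - (∑ k, G (min 1 |2*(x k)-1|)) / N
      = (∫ ω, ψ ω ∂μ1) - (∫ ω, ψ ω ∂μ2) / N := by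
    rw [e1, e2]
    field_simp
    ring
  set h : ℝ → ℝ := fun t => (μ1 {a | t ≤ ψ a}).toReal with hh
  set g : ℝ → ℝ := fun t => (μ2 {a | t ≤ ψ a}).toReal with hg
  have hanti : Antitone h := fun t t' htt' =>
    ENNReal.toReal_mono (measure_ne_top μ1 _) (measure_mono fun a ha => htt'.trans ha)
  have ganti : Antitone g := fun t t' htt' =>
    ENNReal.toReal_mono (measure_ne_top μ2 _) (measure_mono fun a ha => htt'.trans ha)
  have hble : ∀ t, h t ≤ 1 := by
    intro t
    have h1 : μ1 {a | t ≤ ψ a} ≤ μ1 Set.univ := measure_mono (subset_univ _)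
    have h2 : μ1 Set.univ = ENNReal.ofReal 1 := by
      rw [hμ1, Measure.restrict_apply_univ, Real.volume_Icc]; norm_num
    calc h t ≤ (μ1 Set.univ).toReal := ENNReal.toReal_mono (measure_ne_top _ _) h1
      _ = 1 := by rw [h2]; simp
  have gble : ∀ t, g t ≤ N := by
    intro t
    have h1 : μ2 {a | t ≤ ψ a} ≤ μ2 Set.univ := measure_mono (subset_univ _)
    have h2 : μ2 Set.univ = (N : ℝ≥0∞) := by
      rw [hμ2, Measure.finset_sum_apply]; simp
    calc g t ≤ (μ2 Set.univ).toReal := ENNReal.toReal_mono (measure_ne_top _ _) h1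
      _ = N := by rw [h2]; simp
  haveI : IsFiniteMeasure (volume.restrict (Ioc (0:ℝ) M)) := ⟨by
    rw [Measure.restrict_apply_univ, Real.volume_Ioc]; exact ENNReal.ofReal_lt_top⟩
  have hint_h : IntegrableOn h (Ioc 0 M) := by
    refine Integrable.mono' (integrable_const 1)
      hanti.measurable.aestronglyMeasurable (ae_of_all _ fun t => ?_)
    rw [Real.norm_eq_abs, abs_of_nonneg ENNReal.toReal_nonneg]
    exact hble t
  have hint_g : IntegrableOn g (Ioc 0 M) := by
    refine Integrable.mono' (integrable_const (N:ℝ))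
      ganti.measurable.aestronglyMeasurable (ae_of_all _ fun t => ?_)
    rw [Real.norm_eq_abs, abs_of_nonneg ENNReal.toReal_nonneg]
    exact gble t
  have hclaim : ∀ t : ℝ, |h t - g t / N| ≤ discrepancy x := by
    intro t
    have hLC := level_claim hN hG x hx t
    have hres : h t = (volume ({u : ℝ | t ≤ G (min 1 |2*u-1|) - G 0} ∩ Icc 0 1)).toReal := by
      simp only [hh]
      rw [hμ1, Measure.restrict_apply
        (show MeasurableSet {a : ℝ | t ≤ ψ a} from hψmeas measurableSet_Ici)]
    have hg' : g t = ∑ k, if x k ∈ {u : ℝ | t ≤ G (min 1 |2*u-1|) - G 0} then (1:ℝ) else 0 := by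
      simp only [hg, hμ2, Measure.finset_sum_apply]
      rw [ENNReal.toReal_sum (fun k _ => by
        rw [Measure.dirac_apply]
        by_cases hk : x k ∈ {a : ℝ | t ≤ ψ a} <;> simp [hk])]
      refine Finset.sum_congr rfl fun k _ => ?_
      rw [Measure.dirac_apply]
      simp only [indicator_apply, mem_setOf_eq, hψ]
      by_cases hcond : t ≤ G (min 1 |2 * x k - 1|) - G 0 <;> simp [hcond]
    rw [hres, hg']
    exact hLC
  rw [ediff, lc1, lc2, ← integral_div]
  change |(∫ t in Ioc (0:ℝ) M, h t) - ∫ t in Ioc (0:ℝ) M, g t / N| ≤ M * discrepancy x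
  rw [← integral_sub hint_h (hint_g.div_const _)]
  have habs : |∫ t in Ioc (0:ℝ) M, (h t - g t / N)| ≤
      ∫ t in Ioc (0:ℝ) M, |h t - g t / N| := by
    simpa [Real.norm_eq_abs] using
      norm_integral_le_integral_norm (μ := volume.restrict (Ioc (0:ℝ) M))
        (f := fun t => h t - g t / N)
  have hmono : (∫ t in Ioc (0:ℝ) M, |h t - g t / N|) ≤
      ∫ _t in Ioc (0:ℝ) M, discrepancy x := by
    refine integral_mono (hint_h.sub (hint_g.div_const _)).abs (integrable_const _) ?_
    exact fun t => hclaim t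
  have hconst : (∫ _t in Ioc (0:ℝ) M, discrepancy x) = M * discrepancy x := by
    rw [integral_const, measureReal_restrict_apply_univ, Measure.real, Real.volume_Ioc, smul_eq_mul,
      ENNReal.toReal_ofReal (by linarith)]
    norm_num
  rw [hM] at hconst ⊢
  linarith [habs, hmono, hconst.le, hconst.ge]

lemma tent_intervalIntegrable {G : ℝ → ℝ} (hG : Monotone G) :
    IntervalIntegrable (fun t => G (min 1 |2*t-1|)) volume 0 1 := by
  haveI : IsFiniteMeasure (volume.restrict (Ioc (0:ℝ) 1)) := ⟨by
    rw [Measure.restrict_apply_univ, Real.volume_Ioc]; exact ENNReal.ofReal_lt_top⟩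
  rw [intervalIntegrable_iff_integrableOn_Ioc_of_le zero_le_one]
  have hmeas : Measurable fun t : ℝ => G (min 1 |2*t-1|) := hG.measurable.comp meas_m
  refine Integrable.mono' (integrable_const (|G 0| + |G 1|)) hmeas.aestronglyMeasurable
    (ae_of_all _ fun t => ?_)
  rw [Real.norm_eq_abs, abs_le]
  have h0 : G 0 ≤ G (min 1 |2*t-1|) := hG (mem_m t).1
  have h1 : G (min 1 |2*t-1|) ≤ G 1 := hG (mem_m t).2
  constructor
  · have := neg_abs_le (G 0); linarith [abs_nonneg (G 1)]
  · have := le_abs_self (G 1); linarith [abs_nonneg (G 0)]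

end Helpers

/-- Symmetric version of Koksma's inequality. -/
theorem symmetric_koksma {N : ℕ} (hN : 0 < N) (f : ℝ → ℝ)
    (hBV : BoundedVariationOn f (Icc 0 1))
    (hsym : ∀ y ∈ Icc (0:ℝ) (1/2), f (1/2 - y) = f (1/2 + y))
    (x : Fin N → ℝ) (hx : ∀ k, x k ∈ Icc (0:ℝ) 1) :
    |(∫ t in (0:ℝ)..1, f t) - (∑ k, f (x k)) / N| ≤
      (eVariationOn f (Icc 0 1)).toReal / 2 * discrepancy x := by
  classical
  set F : ℝ → ℝ := fun u => f (1/2 + u/2) with hF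
  -- f equals F composed with the tent map on [0,1]
  have hfm : ∀ t ∈ Icc (0:ℝ) 1, f t = F (min 1 |2*t-1|) := by
    intro t ht
    rw [m_eq_abs ht]
    simp only [hF]
    rcases le_or_gt (1/2 : ℝ) t with h | h
    · rw [abs_of_nonneg (by linarith)]
      congr 1
      ring
    · rw [abs_of_neg (by linarith)]
      have hy : (1/2 - t) ∈ Icc (0:ℝ) (1/2) := ⟨by linarith, by linarith [ht.1]⟩
      have h2 := hsym _ hy
      rw [show (1:ℝ)/2 - (1/2 - t) = t by ring] at h2
      rw [show (1:ℝ)/2 + -(2*t-1)/2 = 1/2 + (1/2 - t) by ring]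
      exact h2
  -- variation of F on [0,1] equals variation of f on [1/2,1]
  have hvf : eVariationOn F (Icc 0 1) = eVariationOn f (Icc (1/2) 1) := by
    have hφ : MonotoneOn (fun u : ℝ => 1/2 + u/2) (Icc 0 1) :=
      fun a _ b _ hab => by simp only; linarith
    have himg : (fun u : ℝ => 1/2 + u/2) '' Icc 0 1 = Icc (1/2) 1 := by
      ext y
      constructor
      · rintro ⟨u, hu, rfl⟩
        exact ⟨by simp only; linarith [hu.1], by simp only; linarith [hu.2]⟩
      · intro hy
        exact ⟨2*y - 1, ⟨by linarith [hy.1], by linarith [hy.2]⟩, by simp only; ring⟩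
    have := eVariationOn.comp_eq_of_monotoneOn f (fun u : ℝ => 1/2 + u/2) hφ
    rw [himg] at this
    exact this
  -- reflection symmetry of variation
  have hrefl : eVariationOn f (Icc (1/2) 1) = eVariationOn f (Icc 0 (1/2)) := by
    have hρ : AntitoneOn (fun y : ℝ => 1 - y) (Icc (1/2) 1) :=
      fun a _ b _ hab => by simp only; linarith
    have himg : (fun y : ℝ => 1 - y) '' Icc (1/2) 1 = Icc 0 (1/2) := by
      ext y
      constructor
      · rintro ⟨u, hu, rfl⟩
        exact ⟨by simp only; linarith [hu.2], by simp only; linarith [hu.1]⟩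
      · intro hy
        exact ⟨1 - y, ⟨by linarith [hy.2], by linarith [hy.1]⟩, by simp only; ring⟩
    have hcomp := eVariationOn.comp_eq_of_antitoneOn f (fun y : ℝ => 1 - y) hρ
    rw [himg] at hcomp
    have heq : EqOn ((fun y => f y) ∘ fun y : ℝ => 1 - y) f (Icc (1/2) 1) := by
      intro u hu
      have hy : (u - 1/2) ∈ Icc (0:ℝ) (1/2) := ⟨by linarith [hu.1], by linarith [hu.2]⟩
      have h2 := hsym _ hy
      rw [show (1:ℝ)/2 - (u - 1/2) = 1 - u by ring, show (1:ℝ)/2 + (u - 1/2) = u by ring] at h2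
      exact h2
    rw [← eVariationOn.eq_of_eqOn heq, hcomp]
  -- splitting of variation at 1/2
  have hsplit : eVariationOn f (Icc 0 (1/2)) + eVariationOn f (Icc (1/2) 1) =
      eVariationOn f (Icc 0 1) := by
    have := eVariationOn.Icc_add_Icc f (s := (univ : Set ℝ))
      (a := (0:ℝ)) (b := (1/2:ℝ)) (c := (1:ℝ)) (by norm_num) (by norm_num) (mem_univ _)
    simpa using this
  have hne : eVariationOn f (Icc 0 1) ≠ ⊤ := hBV
  have hne2 : eVariationOn f (Icc (1/2) 1) ≠ ⊤ :=
    ne_top_of_le_ne_top hBV (eVariationOn.mono f (Icc_subset_Icc (by norm_num) le_rfl))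
  have hne1 : eVariationOn f (Icc 0 (1/2)) ≠ ⊤ :=
    ne_top_of_le_ne_top hBV (Icc_subset_Icc le_rfl (by norm_num) |> eVariationOn.mono f)
  have hFne : eVariationOn F (Icc 0 1) ≠ ⊤ := by rw [hvf]; exact hne2
  -- v1 = T/2
  have hhalf : (eVariationOn F (Icc 0 1)).toReal = (eVariationOn f (Icc 0 1)).toReal / 2 := by
    have h1 : (eVariationOn f (Icc 0 (1/2))).toReal + (eVariationOn f (Icc (1/2) 1)).toReal
        = (eVariationOn f (Icc 0 1)).toReal := by
      rw [← ENNReal.toReal_add hne1 hne2, hsplit]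
    have h2 : (eVariationOn f (Icc (1/2) 1)).toReal = (eVariationOn f (Icc 0 (1/2))).toReal := by
      rw [hrefl]
    rw [hvf]
    linarith
  -- the clamp map
  set cl : ℝ → ℝ := fun u => max 0 (min 1 u) with hcl
  have hcl_mono : Monotone cl := fun a b hab => by
    simp only [hcl]
    exact max_le_max le_rfl (min_le_min le_rfl hab)
  have hcl_mem : ∀ u, cl u ∈ Icc (0:ℝ) 1 :=
    fun u => ⟨le_max_left _ _, max_le zero_le_one (min_le_left _ _)⟩
  have hcl_id : ∀ u ∈ Icc (0:ℝ) 1, cl u = u := by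
    intro u hu
    simp only [hcl]
    rw [min_eq_right hu.2, max_eq_right hu.1]
  -- the variation function
  set v : ℝ → ℝ := fun u => (eVariationOn F (Icc 0 (cl u))).toReal with hv
  have hvfin : ∀ u, eVariationOn F (Icc 0 (cl u)) ≠ ⊤ := fun u =>
    ne_top_of_le_ne_top hFne (eVariationOn.mono F (Icc_subset_Icc le_rfl (hcl_mem u).2))
  have hkey : ∀ u w : ℝ, u ≤ w →
      |F (cl w) - F (cl u)| ≤ v w - v u := by
    intro u w huw
    have hcd : cl u ≤ cl w := hcl_mono huw
    have hadd : eVariationOn F (Icc 0 (cl u)) + eVariationOn F (Icc (cl u) (cl w)) =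
        eVariationOn F (Icc 0 (cl w)) := by
      have := eVariationOn.Icc_add_Icc F (s := (univ : Set ℝ))
        (a := (0:ℝ)) (b := cl u) (c := cl w) (hcl_mem u).1 hcd (mem_univ _)
      simpa using this
    have hmidfin : eVariationOn F (Icc (cl u) (cl w)) ≠ ⊤ :=
      ne_top_of_le_ne_top hFne
        (eVariationOn.mono F (Icc_subset_Icc (hcl_mem u).1 (hcl_mem w).2))
    have hsum : v u + (eVariationOn F (Icc (cl u) (cl w))).toReal = v w := by
      simp only [hv]
      rw [← ENNReal.toReal_add (hvfin u) hmidfin, hadd]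
    have hed : ENNReal.ofReal (dist (F (cl u)) (F (cl w))) ≤
        eVariationOn F (Icc (cl u) (cl w)) := by
      rw [← edist_dist]
      exact eVariationOn.edist_le F (left_mem_Icc.2 hcd) (right_mem_Icc.2 hcd)
    have hd : dist (F (cl u)) (F (cl w)) ≤ (eVariationOn F (Icc (cl u) (cl w))).toReal := by
      have := ENNReal.toReal_mono hmidfin hed
      rwa [ENNReal.toReal_ofReal dist_nonneg] at this
    rw [Real.dist_eq, abs_sub_comm] at hd
    linarith
  -- Jordan pieces
  set A : ℝ → ℝ := fun u => (v u + F (cl u)) / 2 with hA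
  set B : ℝ → ℝ := fun u => (v u - F (cl u)) / 2 with hB
  have hAmono : Monotone A := by
    intro u w huw
    have := hkey u w huw
    have h1 := abs_le.mp this
    simp only [hA]
    linarith [h1.1]
  have hBmono : Monotone B := by
    intro u w huw
    have := hkey u w huw
    have h1 := abs_le.mp this
    simp only [hB]
    linarith [h1.2]
  have hABF : ∀ u ∈ Icc (0:ℝ) 1, A u - B u = F u := by
    intro u hu
    simp only [hA, hB, hcl_id u hu]
    ring
  -- rewrite the integral
  have hInt : (∫ t in (0:ℝ)..1, f t) =
      (∫ t in (0:ℝ)..1, A (min 1 |2*t-1|)) - ∫ t in (0:ℝ)..1, B (min 1 |2*t-1|) := by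
    rw [← intervalIntegral.integral_sub (tent_intervalIntegrable hAmono)
      (tent_intervalIntegrable hBmono)]
    apply intervalIntegral.integral_congr
    intro t ht
    rw [uIcc_of_le zero_le_one] at ht
    rw [hfm t ht, ← hABF _ (mem_m t)]
  -- rewrite the sum
  have hSum : (∑ k, f (x k)) =
      (∑ k, A (min 1 |2*(x k)-1|)) - ∑ k, B (min 1 |2*(x k)-1|) := by
    rw [← Finset.sum_sub_distrib]
    refine Finset.sum_congr rfl fun k _ => ?_
    rw [hfm _ (hx k), ← hABF _ (mem_m (x k))]
  -- apply the monotone Koksma inequality twice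
  have k1 := mono_koksma hN hAmono x hx
  have k2 := mono_koksma hN hBmono x hx
  have hNpos : (0:ℝ) < N := by exact_mod_cast hN
  have hv0 : v 0 = 0 := by
    have : cl 0 = 0 := hcl_id 0 ⟨le_rfl, zero_le_one⟩
    simp only [hv, this, Icc_self]
    rw [eVariationOn.subsingleton F subsingleton_singleton]
    simp
  have hv1 : v 1 = (eVariationOn f (Icc 0 1)).toReal / 2 := by
    have : cl 1 = 1 := hcl_id 1 ⟨zero_le_one, le_rfl⟩
    simp only [hv, this]
    exact hhalf
  have hco : (A 1 - A 0) + (B 1 - B 0) = v 1 - v 0 := by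
    simp only [hA, hB]
    ring
  have hD0 := disc_nonneg hN x
  calc |(∫ t in (0:ℝ)..1, f t) - (∑ k, f (x k)) / N|
      = |((∫ t in (0:ℝ)..1, A (min 1 |2*t-1|)) - (∑ k, A (min 1 |2*(x k)-1|)) / N) -
          ((∫ t in (0:ℝ)..1, B (min 1 |2*t-1|)) - (∑ k, B (min 1 |2*(x k)-1|)) / N)| := by
        rw [hInt, hSum]
        congr 1
        field_simp
        ring
    _ ≤ |(∫ t in (0:ℝ)..1, A (min 1 |2*t-1|)) - (∑ k, A (min 1 |2*(x k)-1|)) / N| +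
        |(∫ t in (0:ℝ)..1, B (min 1 |2*t-1|)) - (∑ k, B (min 1 |2*(x k)-1|)) / N| :=
        abs_sub _ _
    _ ≤ (A 1 - A 0) * discrepancy x + (B 1 - B 0) * discrepancy x := add_le_add k1 k2
    _ = (v 1 - v 0) * discrepancy x := by rw [← hco]; ring
    _ = (eVariationOn f (Icc 0 1)).toReal / 2 * discrepancy x := by
        rw [hv1, hv0]
        ring
end

section
/- Let n_1, ..., n_N be distinct positive integers and let z ∈ (0,1) be fixed. Then ∫_0^1 ∫_0^1 (Σ_{k=1}^N I_{[a,a+z]}(n_k x))^2 dx da = z(1-z)N, where I_{[a,a+z]}(y) = Σ_{m∈ℤ} 1_{[a,a+z]}(y+m) - z is the centered 1-periodic indicator function of the interval [a, a+z]. -/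
open MeasureTheory Set

noncomputable def cf (z t : ℝ) : ℝ := (if Int.fract t ≤ z then 1 else 0) - z

lemma cf_periodic (z : ℝ) : Function.Periodic (cf z) 1 := fun t => by
  simp [cf, Int.fract_add_one]

lemma cf_meas (z : ℝ) : Measurable (cf z) := by
  apply Measurable.sub _ measurable_const
  exact Measurable.ite (measurableSet_le measurable_fract measurable_const)
    measurable_const measurable_const

lemma cf_bound {z : ℝ} (hz : z ∈ Ioo (0:ℝ) 1) (t : ℝ) : |cf z t| ≤ 1 := by
  obtain ⟨h0, h1⟩ := hz
  simp only [cf]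
  split_ifs <;> rw [abs_le] <;> constructor <;> linarith

lemma ii_of_bdd {g : ℝ → ℝ} (hg : Measurable g) (C : ℝ) (hb : ∀ t, |g t| ≤ C) (a b : ℝ) :
    IntervalIntegrable g volume a b := by
  rw [intervalIntegrable_iff]
  apply Integrable.mono' (g := fun _ => C) (integrableOn_const measure_Ioc_lt_top.ne)
  · exact hg.aestronglyMeasurable.restrict
  · exact Filter.Eventually.of_forall fun t => by simpa using hb t

lemma ae_ne_one : ∀ᵐ t : ℝ, t ≠ 1 := by
  rw [ae_iff]
  simpa using Real.volume_singleton

lemma cf_eq_ae (z : ℝ) : ∀ᵐ t : ℝ, t ∈ Set.uIoc (0:ℝ) 1 → cf z t = (if t ≤ z then 1 else 0) - z := by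
  filter_upwards [ae_ne_one] with t ht hmem
  rw [Set.uIoc_of_le zero_le_one] at hmem
  have h : Int.fract t = t := Int.fract_eq_self.mpr ⟨le_of_lt hmem.1, lt_of_le_of_ne hmem.2 ht⟩
  simp [cf, h]

lemma int_piece {z : ℝ} (h0 : 0 ≤ z) (h1 : z ≤ 1) (A B : ℝ) :
    ∫ t in (0:ℝ)..1, (if t ≤ z then A else B) = z * A + (1 - z) * B := by
  have hI : ∀ a b : ℝ, IntervalIntegrable (fun t => if t ≤ z then A else B) volume a b :=
    ii_of_bdd (Measurable.ite (measurableSet_le measurable_id measurable_const)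
      measurable_const measurable_const) (max |A| |B|)
      (fun t => by split_ifs <;> [exact le_max_left _ _; exact le_max_right _ _]) 
  rw [← intervalIntegral.integral_add_adjacent_intervals (hI 0 z) (hI z 1)]
  have e1 : ∫ t in (0:ℝ)..z, (if t ≤ z then A else B) = z * A := by
    rw [intervalIntegral.integral_congr (g := fun _ => A) ?_, intervalIntegral.integral_const]
    · simp [smul_eq_mul]
    · intro t ht
      rw [Set.uIcc_of_le h0] at ht
      simp [ht.2]
  have e2 : ∫ t in z..(1:ℝ), (if t ≤ z then A else B) = (1 - z) * B := by
    rw [intervalIntegral.integral_congr_ae (g := fun _ => B) ?_, intervalIntegral.integral_const]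
    · simp [smul_eq_mul]
    · refine Filter.Eventually.of_forall fun t ht => ?_
      rw [Set.uIoc_of_le h1] at ht
      simp [not_le.mpr ht.1]
  rw [e1, e2]

lemma int_cf {z : ℝ} (hz : z ∈ Ioo (0:ℝ) 1) : ∫ t in (0:ℝ)..1, cf z t = 0 := by
  rw [intervalIntegral.integral_congr_ae (cf_eq_ae z)]
  have : ∀ t : ℝ, ((if t ≤ z then (1:ℝ) else 0) - z) = if t ≤ z then (1 - z) else (-z) := by
    intro t; split_ifs <;> ring
  simp_rw [this]
  rw [int_piece hz.1.le hz.2.le]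
  ring

lemma int_cf_sq {z : ℝ} (hz : z ∈ Ioo (0:ℝ) 1) : ∫ t in (0:ℝ)..1, (cf z t)^2 = z * (1 - z) := by
  have hae : ∀ᵐ t : ℝ, t ∈ Set.uIoc (0:ℝ) 1 → (cf z t)^2 = if t ≤ z then (1-z)^2 else z^2 := by
    filter_upwards [cf_eq_ae z] with t ht hmem
    rw [ht hmem]
    split_ifs <;> ring
  rw [intervalIntegral.integral_congr_ae hae, int_piece hz.1.le hz.2.le]
  ring

noncomputable def Kz (z t : ℝ) : ℝ := ∫ b in (0:ℝ)..1, cf z b * cf z (b + t)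

lemma prod_periodic (z t : ℝ) : Function.Periodic (fun b => cf z b * cf z (b + t)) 1 := by
  intro b
  simp only
  rw [cf_periodic z b, show b + 1 + t = (b + t) + 1 by ring, cf_periodic z (b + t)]

lemma K_eq (z u v : ℝ) :
    ∫ a in (0:ℝ)..1, cf z (u - a) * cf z (v - a) = Kz z (v - u) := by
  have e : ∀ a ∈ Set.uIcc (0:ℝ) 1,
      cf z (u - a) * cf z (v - a) = (fun b => cf z b * cf z (b + (v - u))) (u - a) := by
    intro a _
    simp only
    rw [show u - a + (v - u) = v - a by ring]
  rw [intervalIntegral.integral_congr e,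
    intervalIntegral.integral_comp_sub_left (fun b => cf z b * cf z (b + (v - u))) u]
  have := (prod_periodic z (v - u)).intervalIntegral_add_eq (u - 1) 0
  rw [show u - 1 + 1 = u - 0 by ring, zero_add] at this
  exact this

lemma K_zero {z : ℝ} (hz : z ∈ Ioo (0:ℝ) 1) : Kz z 0 = z * (1 - z) := by
  rw [← int_cf_sq hz]
  unfold Kz
  refine intervalIntegral.integral_congr fun b _ => ?_
  rw [add_zero]; ring

lemma K_periodic (z : ℝ) : Function.Periodic (Kz z) 1 := by
  intro t
  unfold Kz
  refine intervalIntegral.integral_congr fun b _ => ?_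
  rw [show b + (t + 1) = (b + t) + 1 by ring, cf_periodic z (b + t)]

lemma K_meas (z : ℝ) : Measurable (Kz z) := by
  have h : Kz z = fun t => ∫ b in Ioc (0:ℝ) 1, cf z b * cf z (b + t) := by
    funext t
    exact intervalIntegral.integral_of_le zero_le_one
  rw [h]
  have hm : StronglyMeasurable (fun p : ℝ × ℝ => cf z p.2 * cf z (p.2 + p.1)) :=
    (((cf_meas z).comp measurable_snd).mul
      ((cf_meas z).comp (measurable_snd.add measurable_fst))).stronglyMeasurable
  exact hm.integral_prod_right'.measurable

lemma K_bound {z : ℝ} (hz : z ∈ Ioo (0:ℝ) 1) (t : ℝ) : |Kz z t| ≤ 1 := by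
  have h := intervalIntegral.norm_integral_le_of_norm_le_const (C := 1) (a := (0:ℝ)) (b := 1)
    (f := fun b => cf z b * cf z (b + t)) (fun x _ => by
      rw [Real.norm_eq_abs, abs_mul]
      exact mul_le_one₀ (cf_bound hz x) (abs_nonneg _) (cf_bound hz (x + t)))
  simpa [Kz] using h

lemma int_K {z : ℝ} (hz : z ∈ Ioo (0:ℝ) 1) : ∫ t in (0:ℝ)..1, Kz z t = 0 := by
  set μ := volume.restrict (Ioc (0:ℝ) 1) with hμ
  haveI : IsFiniteMeasure μ := by
    constructor
    rw [hμ, Measure.restrict_apply_univ]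
    exact measure_Ioc_lt_top
  have hswap : ∫ t, (∫ b, cf z b * cf z (b + t) ∂μ) ∂μ
      = ∫ b, (∫ t, cf z b * cf z (b + t) ∂μ) ∂μ := by
    apply integral_integral_swap
    apply Integrable.mono' (g := fun _ => (1:ℝ)) (integrable_const 1)
    · exact (((cf_meas z).comp measurable_snd).mul
        ((cf_meas z).comp (measurable_snd.add measurable_fst))).aestronglyMeasurable
    · refine Filter.Eventually.of_forall fun p => ?_
      simp only [Function.uncurry, Real.norm_eq_abs, abs_mul]
      exact mul_le_one₀ (cf_bound hz _) (abs_nonneg _) (cf_bound hz _)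
  have h1 : ∫ t in (0:ℝ)..1, Kz z t = ∫ t, (∫ b, cf z b * cf z (b + t) ∂μ) ∂μ := by
    rw [intervalIntegral.integral_of_le zero_le_one]
    refine integral_congr_ae (Filter.Eventually.of_forall fun t => ?_)
    rw [Kz, intervalIntegral.integral_of_le zero_le_one]
  have h2 : ∀ b : ℝ, (∫ t, cf z b * cf z (b + t) ∂μ) = 0 := by
    intro b
    rw [integral_const_mul]
    have : (∫ t, cf z (b + t) ∂μ) = ∫ t in (0:ℝ)..1, cf z (b + t) := by
      rw [intervalIntegral.integral_of_le zero_le_one]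
    rw [this, intervalIntegral.integral_comp_add_left (cf z) b]
    have := (cf_periodic z).intervalIntegral_add_eq b 0
    rw [zero_add] at this
    rw [show b + (0:ℝ) = b from add_zero b, this, int_cf hz, mul_zero]
  rw [h1, hswap]
  simp [h2]

lemma int_K_mul {z : ℝ} (hz : z ∈ Ioo (0:ℝ) 1) (m : ℤ) (hm : m ≠ 0) :
    ∫ x in (0:ℝ)..1, Kz z ((m:ℝ) * x) = 0 := by
  rw [intervalIntegral.integral_comp_mul_left (Kz z) (by exact_mod_cast hm)]
  have hKint : ∀ a b : ℝ, IntervalIntegrable (Kz z) volume a b :=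
    ii_of_bdd (K_meas z) 1 (K_bound hz)
  have h := (K_periodic z).intervalIntegral_add_zsmul_eq m 0 hKint
  rw [zero_add, zero_add] at h
  simp only [zsmul_eq_mul, mul_one] at h
  rw [mul_zero, mul_one, h, int_K hz, mul_zero, smul_zero]

/-- The centered 1-periodic indicator function of the interval `[a, a+z]` (of length `z < 1`),
`I_{[a,a+z]}(x) = ∑_{m ∈ ℤ} 1_{[a,a+z]}(x+m) - z`. -/
noncomputable def centeredInd (a z x : ℝ) : ℝ :=
  (if Int.fract (x - a) ≤ z then 1 else 0) - z

theorem double_integral_sq {N : ℕ} (n : Fin N → ℕ) (hinj : Function.Injective n)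
    (hpos : ∀ k, 0 < n k) (z : ℝ) (hz : z ∈ Ioo (0:ℝ) 1) :
    ∫ a in (0:ℝ)..1, ∫ x in (0:ℝ)..1, (∑ k, centeredInd a z (n k * x)) ^ 2
      = z * (1 - z) * N := by
  have hci : ∀ a y : ℝ, centeredInd a z y = cf z (y - a) := fun _ _ => rfl
  simp only [hci]
  -- measurability and bound of the integrand in the pair
  have hmS : Measurable (fun p : ℝ × ℝ => (∑ k, cf z ((n k : ℝ) * p.2 - p.1)) ^ 2) := by
    apply Measurable.pow_const
    exact Finset.measurable_sum _ fun k _ =>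
      (cf_meas z).comp ((measurable_const.mul measurable_snd).sub measurable_fst)
  have hbS : ∀ p : ℝ × ℝ, ‖(∑ k, cf z ((n k : ℝ) * p.2 - p.1)) ^ 2‖ ≤ (N:ℝ)^2 := by
    intro p
    rw [Real.norm_eq_abs, abs_pow]
    have h1 : |∑ k, cf z ((n k : ℝ) * p.2 - p.1)| ≤ (N:ℝ) := by
      calc |∑ k, cf z ((n k : ℝ) * p.2 - p.1)| ≤ ∑ k, |cf z ((n k : ℝ) * p.2 - p.1)| :=
              Finset.abs_sum_le_sum_abs _ _
        _ ≤ ∑ _k : Fin N, (1:ℝ) := Finset.sum_le_sum fun k _ => cf_bound hz _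
        _ = (N:ℝ) := by simp
    exact pow_le_pow_left₀ (abs_nonneg _) h1 2
  -- Fubini
  set μ := volume.restrict (Ioc (0:ℝ) 1) with hμ
  haveI : IsFiniteMeasure μ := by
    constructor
    rw [hμ, Measure.restrict_apply_univ]
    exact measure_Ioc_lt_top
  have hswap : ∫ a in (0:ℝ)..1, ∫ x in (0:ℝ)..1, (∑ k, cf z ((n k : ℝ) * x - a)) ^ 2
      = ∫ x in (0:ℝ)..1, ∫ a in (0:ℝ)..1, (∑ k, cf z ((n k : ℝ) * x - a)) ^ 2 := by
    simp only [intervalIntegral.integral_of_le zero_le_one]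
    apply integral_integral_swap
    apply Integrable.mono' (g := fun _ => ((N:ℝ)^2)) (integrable_const _)
    · exact hmS.aestronglyMeasurable
    · exact Filter.Eventually.of_forall fun p => hbS p
  rw [hswap]
  -- inner integral over a
  have hinner : ∀ x : ℝ, ∫ a in (0:ℝ)..1, (∑ k, cf z ((n k : ℝ) * x - a)) ^ 2
      = ∑ k, ∑ j, Kz z (((n j : ℝ) - (n k : ℝ)) * x) := by
    intro x
    have e1 : ∀ a ∈ Set.uIcc (0:ℝ) 1, (∑ k, cf z ((n k : ℝ) * x - a)) ^ 2
        = ∑ k, ∑ j, cf z ((n k : ℝ) * x - a) * cf z ((n j : ℝ) * x - a) := by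
      intro a _
      rw [sq, Finset.sum_mul_sum]
    rw [intervalIntegral.integral_congr e1]
    have hii2 : ∀ k j : Fin N, IntervalIntegrable
        (fun a => cf z ((n k : ℝ) * x - a) * cf z ((n j : ℝ) * x - a)) volume 0 1 := by
      intro k j
      apply ii_of_bdd _ 1 _
      · exact ((cf_meas z).comp (measurable_const.sub measurable_id)).mul
          ((cf_meas z).comp (measurable_const.sub measurable_id))
      · intro a
        rw [abs_mul]
        exact mul_le_one₀ (cf_bound hz _) (abs_nonneg _) (cf_bound hz _)
    have hii1 : ∀ k : Fin N, IntervalIntegrable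
        (fun a => ∑ j, cf z ((n k : ℝ) * x - a) * cf z ((n j : ℝ) * x - a)) volume 0 1 := by
      intro k
      apply ii_of_bdd _ (N:ℝ) _
      · exact Finset.measurable_sum _ fun j _ =>
          ((cf_meas z).comp (measurable_const.sub measurable_id)).mul
          ((cf_meas z).comp (measurable_const.sub measurable_id))
      · intro a
        calc |∑ j, cf z ((n k : ℝ) * x - a) * cf z ((n j : ℝ) * x - a)|
            ≤ ∑ j, |cf z ((n k : ℝ) * x - a) * cf z ((n j : ℝ) * x - a)| :=
              Finset.abs_sum_le_sum_abs _ _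
          _ ≤ ∑ _j : Fin N, (1:ℝ) := Finset.sum_le_sum fun j _ => by
              rw [abs_mul]
              exact mul_le_one₀ (cf_bound hz _) (abs_nonneg _) (cf_bound hz _)
          _ = (N:ℝ) := by simp
    rw [intervalIntegral.integral_finset_sum fun k _ => hii1 k]
    refine Finset.sum_congr rfl fun k _ => ?_
    rw [intervalIntegral.integral_finset_sum fun j _ => hii2 k j]
    refine Finset.sum_congr rfl fun j _ => ?_
    rw [K_eq z ((n k : ℝ) * x) ((n j : ℝ) * x)]
    congr 1
    ring
  rw [intervalIntegral.integral_congr fun x _ => hinner x]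
  -- pull the sums out of the x-integral
  have hKint : ∀ (c : ℝ), IntervalIntegrable (fun x => Kz z (c * x)) volume 0 1 := by
    intro c
    apply ii_of_bdd _ 1 _
    · exact (K_meas z).comp (measurable_const.mul measurable_id)
    · exact fun t => K_bound hz _
  have hiiK : ∀ k : Fin N, IntervalIntegrable
      (fun x => ∑ j, Kz z (((n j : ℝ) - (n k : ℝ)) * x)) volume 0 1 := by
    intro k
    apply ii_of_bdd _ (N:ℝ) _
    · exact Finset.measurable_sum _ fun j _ =>
        (K_meas z).comp (measurable_const.mul measurable_id)
    · intro x
      calc |∑ j, Kz z (((n j : ℝ) - (n k : ℝ)) * x)|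
          ≤ ∑ j, |Kz z (((n j : ℝ) - (n k : ℝ)) * x)| := Finset.abs_sum_le_sum_abs _ _
        _ ≤ ∑ _j : Fin N, (1:ℝ) := Finset.sum_le_sum fun j _ => K_bound hz _
        _ = (N:ℝ) := by simp
  rw [intervalIntegral.integral_finset_sum fun k _ => hiiK k]
  have hsum : ∀ k : Fin N, ∫ x in (0:ℝ)..1, ∑ j, Kz z (((n j : ℝ) - (n k : ℝ)) * x)
      = z * (1 - z) := by
    intro k
    rw [intervalIntegral.integral_finset_sum (fun j _ => hKint _)]
    rw [Finset.sum_eq_single_of_mem k (Finset.mem_univ k)]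
    · simp only [sub_self, zero_mul]
      rw [intervalIntegral.integral_const, K_zero hz]
      simp
    · intro j _ hj
      have hne : (n j : ℤ) - (n k : ℤ) ≠ 0 := by
        intro h
        apply hj
        apply hinj
        have : (n j : ℤ) = (n k : ℤ) := by linarith [sub_eq_zero.mp h]
        exact_mod_cast this
      have := int_K_mul hz ((n j : ℤ) - (n k : ℤ)) hne
      rw [show (((n j : ℤ) - (n k : ℤ) : ℤ) : ℝ) = ((n j : ℝ) - (n k : ℝ)) by push_cast; ring] at this
      exact this
  rw [Finset.sum_congr rfl fun k _ => hsum k]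
  rw [Finset.sum_const, Finset.card_univ, Fintype.card_fin, nsmul_eq_mul]
  ring
end

section
/- Let m and n be distinct positive integers and z ∈ (0,1). Then ∫_0^1 ∫_0^1 I_{[a,a+z]}(m x) · I_{[a,a+z]}(n x) dx da = 0, where I_{[a,a+z]} is the centered 1-periodic indicator of [a, a+z]. -/
open MeasureTheory Set

namespace AvgOrth

lemma centeredInd_shift (a z x : ℝ) : centeredInd a z x = centeredInd 0 z (x - a) := by
  simp [centeredInd]

lemma measurable_centeredInd2 (z : ℝ) :
    Measurable (fun p : ℝ × ℝ => centeredInd p.1 z p.2) := by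
  unfold centeredInd
  refine Measurable.sub ?_ measurable_const
  refine Measurable.ite ?_ measurable_const measurable_const
  exact measurableSet_le (measurable_fract.comp (measurable_snd.sub measurable_fst))
    measurable_const

lemma measurable_centeredInd (z : ℝ) : Measurable (centeredInd 0 z) :=
  (measurable_centeredInd2 z).comp (measurable_const.prodMk measurable_id)

lemma abs_centeredInd_le {z : ℝ} (hz0 : 0 ≤ z) (hz1 : z ≤ 1) (a x : ℝ) :
    |centeredInd a z x| ≤ 1 := by
  unfold centeredInd
  split_ifs <;> rw [abs_le] <;> constructor <;> linarith

lemma periodic_centeredInd (z : ℝ) : Function.Periodic (centeredInd 0 z) 1 := by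
  intro x
  unfold centeredInd
  rw [show x + 1 - 0 = (x - 0) + 1 by ring, Int.fract_add_one]

instance finite_restrict : IsFiniteMeasure (volume.restrict (Ioc (0:ℝ) 1)) :=
  ⟨by rw [Measure.restrict_apply_univ, Real.volume_Ioc]; exact ENNReal.ofReal_lt_top⟩

lemma integrable_of_bdd {α : Type*} [MeasurableSpace α] {μ : Measure α} [IsFiniteMeasure μ]
    {g : α → ℝ} (hg : AEStronglyMeasurable g μ) {C : ℝ} (h : ∀ x, |g x| ≤ C) :
    Integrable g μ :=
  Integrable.mono' (integrable_const C) hg (ae_of_all _ fun x => by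
    rw [Real.norm_eq_abs]; exact h x)

lemma intInt_of_bdd {g : ℝ → ℝ} (hg : Measurable g) {C : ℝ} (h : ∀ x, |g x| ≤ C)
    (t₁ t₂ : ℝ) : IntervalIntegrable g volume t₁ t₂ := by
  rw [intervalIntegrable_iff]
  haveI : IsFiniteMeasure (volume.restrict (Set.uIoc t₁ t₂)) :=
    ⟨by rw [Measure.restrict_apply_univ, Set.uIoc, Real.volume_Ioc]
        exact ENNReal.ofReal_lt_top⟩
  exact integrable_of_bdd (hg.aestronglyMeasurable.restrict) h

lemma intInt_centeredInd {z : ℝ} (hz0 : 0 ≤ z) (hz1 : z ≤ 1) (t₁ t₂ : ℝ) :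
    IntervalIntegrable (centeredInd 0 z) volume t₁ t₂ :=
  intInt_of_bdd (measurable_centeredInd z) (abs_centeredInd_le hz0 hz1 0) t₁ t₂

lemma ae_ne_one : ∀ᵐ x : ℝ, x ≠ 1 := by
  rw [ae_iff]
  have : {x : ℝ | ¬ x ≠ 1} = {1} := by ext x; simp
  rw [this]
  exact measure_singleton 1

lemma integral_centeredInd {z : ℝ} (hz : z ∈ Ioo (0:ℝ) 1) :
    ∫ t in (0:ℝ)..1, centeredInd 0 z t = 0 := by
  obtain ⟨hz0, hz1⟩ := hz
  have h1 : ∫ t in (0:ℝ)..z, centeredInd 0 z t = z * (1 - z) := by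
    rw [intervalIntegral.integral_congr (g := fun _ => 1 - z) ?_]
    · rw [intervalIntegral.integral_const]; rw [smul_eq_mul]; ring
    · intro t ht
      rw [Set.uIcc_of_le hz0.le] at ht
      unfold centeredInd
      rw [sub_zero, Int.fract_eq_self.mpr ⟨ht.1, lt_of_le_of_lt ht.2 hz1⟩, if_pos ht.2]
  have h2 : ∫ t in z..1, centeredInd 0 z t = (1 - z) * (-z) := by
    rw [intervalIntegral.integral_congr_ae (g := fun _ => -z) ?_]
    · rw [intervalIntegral.integral_const]; rw [smul_eq_mul]
    · filter_upwards [ae_ne_one] with t ht hmem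
      rw [Set.uIoc_of_le hz1.le] at hmem
      unfold centeredInd
      have htlt : t < 1 := lt_of_le_of_ne hmem.2 ht
      rw [sub_zero, Int.fract_eq_self.mpr ⟨(hz0.trans hmem.1).le, htlt⟩,
        if_neg (not_le.mpr hmem.1)]
      ring
  have hadd := intervalIntegral.integral_add_adjacent_intervals
    (intInt_centeredInd hz0.le hz1.le 0 z) (intInt_centeredInd hz0.le hz1.le z 1)
  rw [← hadd, h1, h2]; ring

/-- The autocorrelation function. -/
noncomputable def G (z t : ℝ) : ℝ :=
  ∫ s in (0:ℝ)..1, centeredInd 0 z (t + s) * centeredInd 0 z s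

lemma measurable_G (z : ℝ) : Measurable (G z) := by
  have hm : StronglyMeasurable
      (fun p : ℝ × ℝ => centeredInd 0 z (p.1 + p.2) * centeredInd 0 z p.2) := by
    exact (((measurable_centeredInd z).comp (measurable_fst.add measurable_snd)).mul
      ((measurable_centeredInd z).comp measurable_snd)).stronglyMeasurable
  have h := hm.integral_prod_right' (ν := volume.restrict (Ioc (0:ℝ) 1))
  have : G z = fun t => ∫ s in Ioc (0:ℝ) 1,
      centeredInd 0 z (t + s) * centeredInd 0 z s := by
    funext t
    rw [G, intervalIntegral.integral_of_le zero_le_one]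
  rw [this]
  exact h.measurable

lemma abs_G_le {z : ℝ} (hz0 : 0 ≤ z) (hz1 : z ≤ 1) (t : ℝ) : |G z t| ≤ 1 := by
  have := intervalIntegral.norm_integral_le_of_norm_le_const (C := 1) (a := (0:ℝ)) (b := 1)
    (f := fun s => centeredInd 0 z (t + s) * centeredInd 0 z s) ?_
  · simpa [G] using this
  · intro x _
    rw [Real.norm_eq_abs, abs_mul]
    have h1 := abs_centeredInd_le hz0 hz1 0 (t + x)
    have h2 := abs_centeredInd_le hz0 hz1 0 x
    nlinarith [abs_nonneg (centeredInd 0 z (t + x)), abs_nonneg (centeredInd 0 z x)]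

lemma periodic_G (z : ℝ) : Function.Periodic (G z) 1 := by
  intro t
  unfold G
  apply intervalIntegral.integral_congr
  intro s _
  show centeredInd 0 z (t + 1 + s) * centeredInd 0 z s
    = centeredInd 0 z (t + s) * centeredInd 0 z s
  rw [show t + 1 + s = (t + s) + 1 by ring, periodic_centeredInd z (t + s)]

lemma intInt_G {z : ℝ} (hz0 : 0 ≤ z) (hz1 : z ≤ 1) :
    ∀ t₁ t₂, IntervalIntegrable (G z) volume t₁ t₂ :=
  intInt_of_bdd (measurable_G z) (abs_G_le hz0 hz1)

lemma inner_eq {z : ℝ} (u v : ℝ) :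
    ∫ a in (0:ℝ)..1, centeredInd a z u * centeredInd a z v = G z (u - v) := by
  set h : ℝ → ℝ := fun s => centeredInd 0 z ((u - v) + s) * centeredInd 0 z s with hh
  have step1 : ∫ a in (0:ℝ)..1, centeredInd a z u * centeredInd a z v
      = ∫ a in (0:ℝ)..1, h (v - a) := by
    apply intervalIntegral.integral_congr
    intro a _
    show centeredInd a z u * centeredInd a z v = h (v - a)
    rw [centeredInd_shift a z u, centeredInd_shift a z v, hh]
    simp only
    rw [show (u - v) + (v - a) = u - a by ring]
  have step2 : ∫ a in (0:ℝ)..1, h (v - a) = ∫ s in (v - 1)..(v - 0), h s :=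
    intervalIntegral.integral_comp_sub_left h v
  have hper : Function.Periodic h 1 := by
    intro s
    rw [hh]
    simp only
    rw [show (u - v) + (s + 1) = ((u - v) + s) + 1 by ring,
      periodic_centeredInd z ((u - v) + s), periodic_centeredInd z s]
  have step3 : ∫ s in (v - 1)..(v - 0), h s = ∫ s in (0:ℝ)..1, h s := by
    have := hper.intervalIntegral_add_eq (v - 1) 0
    rw [show v - 1 + 1 = v - 0 by ring, zero_add] at this
    exact this
  rw [step1, step2, step3]
  rfl

lemma integrable_prod_shift {z : ℝ} (hz0 : 0 ≤ z) (hz1 : z ≤ 1) :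
    Integrable (Function.uncurry fun t s =>
        centeredInd 0 z (t + s) * centeredInd 0 z s)
      ((volume.restrict (Ioc (0:ℝ) 1)).prod (volume.restrict (Ioc (0:ℝ) 1))) := by
  apply integrable_of_bdd (C := 1)
  · exact (((measurable_centeredInd z).comp (measurable_fst.add measurable_snd)).mul
      ((measurable_centeredInd z).comp measurable_snd)).aestronglyMeasurable
  · intro p
    rw [Function.uncurry, abs_mul]
    have h1 := abs_centeredInd_le hz0 hz1 0 (p.1 + p.2)
    have h2 := abs_centeredInd_le hz0 hz1 0 p.2
    nlinarith [abs_nonneg (centeredInd 0 z (p.1 + p.2)), abs_nonneg (centeredInd 0 z p.2)]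

lemma integral_G_eq_zero {z : ℝ} (hz : z ∈ Ioo (0:ℝ) 1) :
    ∫ t in (0:ℝ)..1, G z t = 0 := by
  obtain ⟨hz0, hz1⟩ := hz
  have key : ∀ s : ℝ, (∫ t in Ioc (0:ℝ) 1,
      centeredInd 0 z (t + s) * centeredInd 0 z s) = 0 := by
    intro s
    rw [← intervalIntegral.integral_of_le zero_le_one,
      intervalIntegral.integral_mul_const]
    have : (∫ t in (0:ℝ)..1, centeredInd 0 z (t + s)) = 0 := by
      rw [intervalIntegral.integral_comp_add_right (fun x => centeredInd 0 z x) s]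
      have := (periodic_centeredInd z).intervalIntegral_add_eq s 0
      rw [show (0:ℝ) + s = s by ring, show (1:ℝ) + s = s + 1 by ring, this, zero_add]
      exact integral_centeredInd ⟨hz0, hz1⟩
    rw [this, zero_mul]
  have hswap := MeasureTheory.integral_integral_swap
    (μ := volume.restrict (Ioc (0:ℝ) 1)) (ν := volume.restrict (Ioc (0:ℝ) 1))
    (f := fun t s => centeredInd 0 z (t + s) * centeredInd 0 z s)
    (integrable_prod_shift hz0.le hz1.le)
  calc ∫ t in (0:ℝ)..1, G z t
      = ∫ t in Ioc (0:ℝ) 1, ∫ s in Ioc (0:ℝ) 1,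
          centeredInd 0 z (t + s) * centeredInd 0 z s := by
        rw [intervalIntegral.integral_of_le zero_le_one]
        apply setIntegral_congr_fun measurableSet_Ioc
        intro t _
        rw [G, intervalIntegral.integral_of_le zero_le_one]
    _ = ∫ s in Ioc (0:ℝ) 1, ∫ t in Ioc (0:ℝ) 1,
          centeredInd 0 z (t + s) * centeredInd 0 z s := hswap
    _ = 0 := by simp_rw [key]; simp

lemma integrable_prod_main {z : ℝ} (hz0 : 0 ≤ z) (hz1 : z ≤ 1) (m n : ℕ) :
    Integrable (Function.uncurry fun a x =>
        centeredInd a z (m * x) * centeredInd a z (n * x))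
      ((volume.restrict (Ioc (0:ℝ) 1)).prod (volume.restrict (Ioc (0:ℝ) 1))) := by
  apply integrable_of_bdd (C := 1)
  · have h1 : Measurable fun p : ℝ × ℝ => centeredInd p.1 z (m * p.2) :=
      (measurable_centeredInd2 z).comp
        (measurable_fst.prodMk (measurable_const.mul measurable_snd))
    have h2 : Measurable fun p : ℝ × ℝ => centeredInd p.1 z (n * p.2) :=
      (measurable_centeredInd2 z).comp
        (measurable_fst.prodMk (measurable_const.mul measurable_snd))
    exact (h1.mul h2).aestronglyMeasurable
  · intro p
    rw [Function.uncurry, abs_mul]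
    have h1 := abs_centeredInd_le hz0 hz1 p.1 (m * p.2)
    have h2 := abs_centeredInd_le hz0 hz1 p.1 (n * p.2)
    nlinarith [abs_nonneg (centeredInd p.1 z (m * p.2)), abs_nonneg (centeredInd p.1 z (n * p.2))]

end AvgOrth

open AvgOrth in
theorem average_orthogonality (m n : ℕ) (hm : 0 < m) (hn : 0 < n) (hmn : m ≠ n)
    (z : ℝ) (hz : z ∈ Ioo (0:ℝ) 1) :
    ∫ a in (0:ℝ)..1, ∫ x in (0:ℝ)..1,
      centeredInd a z (m * x) * centeredInd a z (n * x) = 0 := by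
  obtain ⟨hz0, hz1⟩ := hz
  have hc : ((m : ℝ) - n) ≠ 0 := sub_ne_zero.mpr (by exact_mod_cast hmn)
  have hswap := MeasureTheory.integral_integral_swap
    (μ := volume.restrict (Ioc (0:ℝ) 1)) (ν := volume.restrict (Ioc (0:ℝ) 1))
    (f := fun a x => centeredInd a z (m * x) * centeredInd a z (n * x))
    (integrable_prod_main hz0.le hz1.le m n)
  have hx : ∀ x : ℝ, (∫ a in Ioc (0:ℝ) 1,
      centeredInd a z (m * x) * centeredInd a z (n * x)) = G z (((m:ℝ) - n) * x) := by
    intro x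
    rw [← intervalIntegral.integral_of_le zero_le_one, inner_eq]
    congr 1
    ring
  have hGzero : ∫ t in (0:ℝ)..1, G z t = 0 := integral_G_eq_zero ⟨hz0, hz1⟩
  calc ∫ a in (0:ℝ)..1, ∫ x in (0:ℝ)..1,
        centeredInd a z (m * x) * centeredInd a z (n * x)
      = ∫ a in Ioc (0:ℝ) 1, ∫ x in Ioc (0:ℝ) 1,
          centeredInd a z (m * x) * centeredInd a z (n * x) := by
        rw [intervalIntegral.integral_of_le zero_le_one]
        apply setIntegral_congr_fun measurableSet_Ioc
        intro a _
        simp only [intervalIntegral.integral_of_le zero_le_one]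
    _ = ∫ x in Ioc (0:ℝ) 1, ∫ a in Ioc (0:ℝ) 1,
          centeredInd a z (m * x) * centeredInd a z (n * x) := hswap
    _ = ∫ x in Ioc (0:ℝ) 1, G z (((m:ℝ) - n) * x) := by
        apply setIntegral_congr_fun measurableSet_Ioc
        intro x _
        exact hx x
    _ = ∫ x in (0:ℝ)..1, G z (((m:ℝ) - n) * x) :=
        (intervalIntegral.integral_of_le zero_le_one).symm
    _ = (((m:ℝ) - n))⁻¹ • ∫ t in (((m:ℝ) - n) * 0)..(((m:ℝ) - n) * 1), G z t :=
        intervalIntegral.integral_comp_mul_left (G z) hc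
    _ = 0 := by
        rw [mul_zero, mul_one]
        have hzsmul := (periodic_G z).intervalIntegral_add_zsmul_eq ((m:ℤ) - n) 0
          (intInt_G hz0.le hz1.le)
        rw [zero_add, zero_add] at hzsmul
        have hcast : ((m:ℤ) - n) • (1:ℝ) = (m:ℝ) - n := by
          rw [zsmul_eq_mul, mul_one]; push_cast; ring
        rw [hcast] at hzsmul
        rw [hzsmul, hGzero, smul_zero, smul_zero]
end

section
/- For x ∈ [0, 1/2], the maximum over a ∈ [1/3, 2/3] of the function σ²_{[0,a]}(x) = a(1-a) + (1-a)(3a-1)/3 - (1/3)∫_0^1 1_{[0,1-a]}(t) 1_{[0,3a-1]}({x-t}) dt equals (-3x² - x + 2)/6 if 0 ≤ x ≤ 1/6, equals (-24x + 25)/72 if 1/6 ≤ x ≤ 3/8, and equals 2/9 if 3/8 ≤ x ≤ 1/2. -/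
open MeasureTheory Set

noncomputable def Fxa (x a : ℝ) : ℝ → ℝ := fun t =>
  (if t ∈ Icc (0:ℝ) (1 - a) then (1:ℝ) else 0) *
  (if Int.fract (x - t) ≤ 3 * a - 1 then (1:ℝ) else 0)

lemma Fxa_meas (x a : ℝ) : Measurable (Fxa x a) := by
  apply Measurable.mul
  · exact Measurable.ite measurableSet_Icc measurable_const measurable_const
  · exact Measurable.ite
      (measurableSet_le ((measurable_const.sub measurable_id).fract) measurable_const)
      measurable_const measurable_const

lemma Fxa_nonneg (x a t : ℝ) : 0 ≤ Fxa x a t := by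
  unfold Fxa; split_ifs <;> norm_num

lemma Fxa_int (x a u v : ℝ) : IntervalIntegrable (Fxa x a) volume u v := by
  apply (intervalIntegrable_const (c := (1:ℝ))).mono_fun'
    ((Fxa_meas x a).aestronglyMeasurable)
  apply Filter.Eventually.of_forall
  intro t
  simp only [Real.norm_eq_abs, Fxa]
  split_ifs <;> norm_num

lemma ae_ne' (v : ℝ) : ∀ᵐ t : ℝ ∂volume, t ≠ v := by
  rw [ae_iff]
  simpa using Real.volume_singleton (x := v)

lemma integ_one (x a u v : ℝ) (huv : u ≤ v) (h : ∀ t ∈ Ioo u v, Fxa x a t = 1) :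
    ∫ t in u..v, Fxa x a t = v - u := by
  have h1 : ∀ᵐ t ∂(volume : Measure ℝ), t ∈ Set.uIoc u v → Fxa x a t = (fun _ => (1:ℝ)) t := by
    filter_upwards [ae_ne' v] with t ht hmem
    rw [Set.uIoc_of_le huv] at hmem
    exact h t ⟨hmem.1, lt_of_le_of_ne hmem.2 ht⟩
  rw [intervalIntegral.integral_congr_ae h1]
  simp

lemma integ_zero (x a u v : ℝ) (huv : u ≤ v) (h : ∀ t ∈ Ioo u v, Fxa x a t = 0) :
    ∫ t in u..v, Fxa x a t = 0 := by
  apply intervalIntegral.integral_zero_ae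
  filter_upwards [ae_ne' v] with t ht hmem
  rw [Set.uIoc_of_le huv] at hmem
  exact h t ⟨hmem.1, lt_of_le_of_ne hmem.2 ht⟩

lemma fract_of_nonneg {r : ℝ} (h0 : 0 ≤ r) (h1 : r < 1) : Int.fract r = r :=
  Int.fract_eq_self.2 ⟨h0, h1⟩

lemma fract_of_neg {r : ℝ} (h0 : -1 ≤ r) (h1 : r < 0) : Int.fract r = r + 1 := by
  have h : Int.fract r = Int.fract (r + ((1:ℤ):ℝ)) := (Int.fract_add_intCast r 1).symm
  push_cast at h
  rw [h, Int.fract_eq_self.2 ⟨by linarith, by linarith⟩]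

lemma integral_value (x a : ℝ) (hx0 : 0 ≤ x) (hx2 : x ≤ 1/2)
    (ha1 : 1/3 ≤ a) (ha2 : a ≤ 2/3)
    (h1 : x ≤ 3*a-1) (h2 : x ≤ 1 - a) (h3 : 1 - a ≤ x + 2 - 3*a) :
    ∫ t in (0:ℝ)..1, Fxa x a t = x := by
  have e1 : ∫ t in (0:ℝ)..x, Fxa x a t = x - 0 := by
    apply integ_one _ _ _ _ hx0
    rintro t ⟨ht0, htx⟩
    have hf : Int.fract (x - t) = x - t := fract_of_nonneg (by linarith) (by linarith)
    have hmem : t ∈ Icc (0:ℝ) (1-a) := ⟨le_of_lt ht0, by linarith⟩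
    have hcond : Int.fract (x - t) ≤ 3*a-1 := by rw [hf]; linarith
    simp [Fxa, hmem, hcond]
  have e2 : ∫ t in x..(1-a), Fxa x a t = 0 := by
    apply integ_zero _ _ _ _ h2
    rintro t ⟨htx, htb⟩
    have hf : Int.fract (x - t) = x - t + 1 := fract_of_neg (by linarith) (by linarith)
    have hcond : ¬ Int.fract (x - t) ≤ 3*a-1 := by rw [hf]; push_neg; linarith
    simp [Fxa, hcond]
  have e3 : ∫ t in (1-a)..(1:ℝ), Fxa x a t = 0 := by
    apply integ_zero _ _ _ _ (by linarith)
    rintro t ⟨htb, ht1⟩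
    have hmem : t ∉ Icc (0:ℝ) (1-a) := fun hc => absurd hc.2 (not_le.2 htb)
    simp [Fxa, hmem]
  have s1 := intervalIntegral.integral_add_adjacent_intervals
    (Fxa_int x a 0 x) (Fxa_int x a x (1-a))
  have s2 := intervalIntegral.integral_add_adjacent_intervals
    (Fxa_int x a 0 (1-a)) (Fxa_int x a (1-a) 1)
  rw [← s2, ← s1, e1, e2, e3]; ring

lemma integral_value0 (x : ℝ) (hx0 : 0 ≤ x) (hx2 : x ≤ 1/2) :
    ∫ t in (0:ℝ)..1, Fxa x (1/3) t = 0 := by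
  apply intervalIntegral.integral_zero_ae
  filter_upwards [ae_ne' x, ae_ne' (x+1)] with t h1 h2 hmem
  rw [Set.uIoc_of_le (by norm_num : (0:ℝ) ≤ 1)] at hmem
  have hpos : (0:ℝ) < Int.fract (x - t) := by
    rcases h1.lt_or_gt with h | h
    · rw [fract_of_nonneg (by linarith) (by linarith [hmem.1])]; linarith
    · have hne : -1 < x - t := by
        rcases eq_or_lt_of_le (by linarith [hmem.2] : -1 ≤ x - t) with he | hl
        · exact absurd (by linarith : t = x + 1) h2
        · exact hl
      rw [fract_of_neg (le_of_lt hne) (by linarith)]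
      linarith
  have hcond : ¬ Int.fract (x - t) ≤ 3*(1/3:ℝ)-1 := by
    rw [show (3*(1/3:ℝ)-1) = 0 by norm_num]
    exact not_le.2 hpos
  show Fxa x (1/3) t = 0
  unfold Fxa
  rw [if_neg hcond, mul_zero]

lemma integral_lower (x a : ℝ) (hx0 : 0 ≤ x) (hx2 : x ≤ 1/2)
    (ha1 : 1/3 ≤ a) (ha2 : a ≤ 2/3) :
    min x (1-a) - max 0 (x - (3*a-1)) + max 0 ((2*a-1) - x)
      ≤ ∫ t in (0:ℝ)..1, Fxa x a t := by
  set u1 := max 0 (x - (3*a-1)) with hu1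
  set v1 := min x (1-a) with hv1
  set u2 := min (1-a) (x + 2 - 3*a) with hu2
  have h0u1 : 0 ≤ u1 := le_max_left _ _
  have hu1v1 : u1 ≤ v1 := max_le (le_min hx0 (by linarith)) (le_min (by linarith) (by linarith))
  have hv1u2 : v1 ≤ u2 := le_min (min_le_right _ _) ((min_le_left _ _).trans (by linarith))
  have hu2b : u2 ≤ 1 - a := min_le_left _ _
  have hb1 : (1:ℝ) - a ≤ 1 := by linarith
  have e1 : ∫ t in u1..v1, Fxa x a t = v1 - u1 := by
    apply integ_one _ _ _ _ hu1v1
    rintro t ⟨htl, htr⟩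
    have ht0 : 0 < t := lt_of_le_of_lt h0u1 htl
    have htx : t < x := lt_of_lt_of_le htr (min_le_left _ _)
    have htb : t ≤ 1 - a := le_of_lt (lt_of_lt_of_le htr (min_le_right _ _))
    have hxc : x - (3*a-1) ≤ u1 := le_max_right _ _
    have hf : Int.fract (x - t) = x - t := fract_of_nonneg (by linarith) (by linarith)
    have hcond : Int.fract (x - t) ≤ 3*a-1 := by rw [hf]; linarith
    have hmem : t ∈ Icc (0:ℝ) (1-a) := ⟨le_of_lt ht0, htb⟩
    simp [Fxa, hmem, hcond]
  have e2 : ∫ t in u2..(1-a), Fxa x a t = (1-a) - u2 := by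
    apply integ_one _ _ _ _ hu2b
    rintro t ⟨htl, htr⟩
    have hcase : x + 2 - 3*a ≤ 1 - a := by
      by_contra hc
      push_neg at hc
      have he : u2 = 1 - a := by rw [hu2]; exact min_eq_left (le_of_lt hc)
      rw [he] at htl
      exact absurd htr (not_lt.2 (le_of_lt htl))
    have hu2e : u2 = x + 2 - 3*a := by rw [hu2]; exact min_eq_right hcase
    rw [hu2e] at htl
    have ht0 : 0 ≤ t := by linarith
    have hxt : x - t < 0 := by linarith
    have hf : Int.fract (x - t) = x - t + 1 := fract_of_neg (by linarith) hxt
    have hcond : Int.fract (x - t) ≤ 3*a-1 := by rw [hf]; linarith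
    have hmem : t ∈ Icc (0:ℝ) (1-a) := ⟨ht0, le_of_lt htr⟩
    simp [Fxa, hmem, hcond]
  have n1 : 0 ≤ ∫ t in (0:ℝ)..u1, Fxa x a t :=
    intervalIntegral.integral_nonneg h0u1 (fun t _ => Fxa_nonneg x a t)
  have n2 : 0 ≤ ∫ t in v1..u2, Fxa x a t :=
    intervalIntegral.integral_nonneg hv1u2 (fun t _ => Fxa_nonneg x a t)
  have n3 : 0 ≤ ∫ t in (1-a)..(1:ℝ), Fxa x a t :=
    intervalIntegral.integral_nonneg hb1 (fun t _ => Fxa_nonneg x a t)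
  have s1 := intervalIntegral.integral_add_adjacent_intervals
    (Fxa_int x a 0 u1) (Fxa_int x a u1 v1)
  have s2 := intervalIntegral.integral_add_adjacent_intervals
    (Fxa_int x a 0 v1) (Fxa_int x a v1 u2)
  have s3 := intervalIntegral.integral_add_adjacent_intervals
    (Fxa_int x a 0 u2) (Fxa_int x a u2 (1-a))
  have s4 := intervalIntegral.integral_add_adjacent_intervals
    (Fxa_int x a 0 (1-a)) (Fxa_int x a (1-a) 1)
  have h23 : (1:ℝ) - a - u2 = max 0 ((2*a-1) - x) := by
    rcases le_total (x + 2 - 3*a) (1-a) with h | h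
    · rw [hu2, min_eq_right h, max_eq_right (by linarith)]; ring
    · rw [hu2, min_eq_left h, max_eq_left (by linarith)]; ring
  rw [← s4, ← s3, ← s2, ← s1, e1, e2]
  linarith [h23.ge, h23.le]

lemma upper1 (x a I : ℝ) (hx0 : 0 ≤ x) (hx6 : x ≤ 1/6) (ha1 : 1/3 ≤ a) (ha2 : a ≤ 2/3)
    (hL : min x (1-a) - max 0 (x-(3*a-1)) + max 0 (2*a-1-x) ≤ I) :
    a*(1-a) + (1-a)*(3*a-1)/3 - (1/3)*I ≤ (-3*x^2 - x + 2)/6 := by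
  rcases le_total x (1-a) with hb | hb
  · rw [min_eq_left hb] at hL
    rcases le_total x (3*a-1) with hc | hc
    · rw [max_eq_left (by linarith : x-(3*a-1) ≤ (0:ℝ))] at hL
      rcases le_total x (2*a-1) with hd | hd
      · rw [max_eq_right (by linarith : (0:ℝ) ≤ 2*a-1-x)] at hL
        nlinarith [mul_nonneg (by linarith : (0:ℝ) ≤ a-(1+x)/2) (by linarith : (0:ℝ) ≤ a-(2-3*x)/6)]
      · rw [max_eq_left (by linarith : 2*a-1-x ≤ (0:ℝ))] at hL
        nlinarith [mul_nonneg (by linarith : (0:ℝ) ≤ (1+x)/2-a) (by linarith : (0:ℝ) ≤ (4-3*x)/6-a)]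
    · rw [max_eq_right (by linarith : (0:ℝ) ≤ x-(3*a-1))] at hL
      rcases le_total x (2*a-1) with hd | hd
      · rw [max_eq_right (by linarith : (0:ℝ) ≤ 2*a-1-x)] at hL
        nlinarith [sq_nonneg (a-1/3), mul_nonneg hx0 (by linarith : (0:ℝ) ≤ 1/6-x)]
      · rw [max_eq_left (by linarith : 2*a-1-x ≤ (0:ℝ))] at hL
        nlinarith [sq_nonneg (a-1/3), mul_nonneg hx0 (by linarith : (0:ℝ) ≤ 1/6-x)]
  · -- 1-a ≤ x ≤ 1/6 contradicts a ≤ 2/3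
    have : (1:ℝ)/3 ≤ 1-a := by linarith
    linarith

lemma upper2 (x a I : ℝ) (hx6 : 1/6 ≤ x) (hx38 : x ≤ 3/8) (ha1 : 1/3 ≤ a) (ha2 : a ≤ 2/3)
    (hL : min x (1-a) - max 0 (x-(3*a-1)) + max 0 (2*a-1-x) ≤ I) :
    a*(1-a) + (1-a)*(3*a-1)/3 - (1/3)*I ≤ (-24*x + 25)/72 := by
  have hx0 : (0:ℝ) ≤ x := by linarith
  rcases le_total x (1-a) with hb | hb
  · rw [min_eq_left hb] at hL
    rcases le_total x (3*a-1) with hc | hc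
    · rw [max_eq_left (by linarith : x-(3*a-1) ≤ (0:ℝ))] at hL
      rcases le_total x (2*a-1) with hd | hd
      · rw [max_eq_right (by linarith : (0:ℝ) ≤ 2*a-1-x)] at hL
        nlinarith [sq_nonneg (a-7/12)]
      · rw [max_eq_left (by linarith : 2*a-1-x ≤ (0:ℝ))] at hL
        nlinarith [sq_nonneg (a-7/12)]
    · rw [max_eq_right (by linarith : (0:ℝ) ≤ x-(3*a-1))] at hL
      rcases le_total x (2*a-1) with hd | hd
      · rw [max_eq_right (by linarith : (0:ℝ) ≤ 2*a-1-x)] at hL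
        nlinarith [sq_nonneg (a-1/3)]
      · rw [max_eq_left (by linarith : 2*a-1-x ≤ (0:ℝ))] at hL
        nlinarith [sq_nonneg (a-1/3)]
  · rw [min_eq_right hb] at hL
    rcases le_total x (3*a-1) with hc | hc
    · rw [max_eq_left (by linarith : x-(3*a-1) ≤ (0:ℝ))] at hL
      rcases le_total x (2*a-1) with hd | hd
      · rw [max_eq_right (by linarith : (0:ℝ) ≤ 2*a-1-x)] at hL
        nlinarith [mul_nonneg (by linarith : (0:ℝ) ≤ a-(1+x)/2) (by linarith : (0:ℝ) ≤ a-(1-x)/2), sq_nonneg (12*x-5), mul_nonneg (by linarith : (0:ℝ) ≤ 3/8-x) (by linarith : (0:ℝ) ≤ x-1/3)]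
      · rw [max_eq_left (by linarith : 2*a-1-x ≤ (0:ℝ))] at hL
        nlinarith [sq_nonneg (a-2/3), mul_nonneg (by linarith : (0:ℝ) ≤ (1+x)/2-a) (by linarith : (0:ℝ) ≤ a-(1-x)), sq_nonneg (12*x-5), mul_nonneg (by linarith : (0:ℝ) ≤ 3/8-x) (by linarith : (0:ℝ) ≤ x-1/3)]
    · rw [max_eq_right (by linarith : (0:ℝ) ≤ x-(3*a-1))] at hL
      -- here 1-a ≤ x and 3a-1 ≤ x force a ≤ (1+x)/3 ≤ 0.46 and a ≥ 1-x ≥ 5/8 : contradiction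
      have h1 : a ≤ (1+x)/3 := by linarith
      have h2 : 1-x ≤ a := by linarith
      linarith

lemma upper3 (x a I : ℝ) (hx38 : 3/8 ≤ x) (hx2 : x ≤ 1/2) (ha1 : 1/3 ≤ a) (ha2 : a ≤ 2/3)
    (hL : min x (1-a) - max 0 (x-(3*a-1)) + max 0 (2*a-1-x) ≤ I) :
    a*(1-a) + (1-a)*(3*a-1)/3 - (1/3)*I ≤ 2/9 := by
  have hx0 : (0:ℝ) ≤ x := by linarith
  rcases le_total x (1-a) with hb | hb
  · rw [min_eq_left hb] at hL
    rcases le_total x (3*a-1) with hc | hc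
    · rw [max_eq_left (by linarith : x-(3*a-1) ≤ (0:ℝ))] at hL
      rcases le_total x (2*a-1) with hd | hd
      · rw [max_eq_right (by linarith : (0:ℝ) ≤ 2*a-1-x)] at hL
        nlinarith [mul_nonneg (by linarith : (0:ℝ) ≤ a-(1+x)/2) (by linarith : (0:ℝ) ≤ a-(1-x)/2), sq_nonneg (3*x-1)]
      · rw [max_eq_left (by linarith : 2*a-1-x ≤ (0:ℝ))] at hL
        nlinarith [sq_nonneg (a-7/12)]
    · rw [max_eq_right (by linarith : (0:ℝ) ≤ x-(3*a-1))] at hL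
      rcases le_total x (2*a-1) with hd | hd
      · rw [max_eq_right (by linarith : (0:ℝ) ≤ 2*a-1-x)] at hL
        nlinarith [sq_nonneg (a-1/3)]
      · rw [max_eq_left (by linarith : 2*a-1-x ≤ (0:ℝ))] at hL
        nlinarith [sq_nonneg (a-1/3)]
  · rw [min_eq_right hb] at hL
    rcases le_total x (3*a-1) with hc | hc
    · rw [max_eq_left (by linarith : x-(3*a-1) ≤ (0:ℝ))] at hL
      rcases le_total x (2*a-1) with hd | hd
      · rw [max_eq_right (by linarith : (0:ℝ) ≤ 2*a-1-x)] at hL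
        nlinarith [mul_nonneg (by linarith : (0:ℝ) ≤ a-(1+x)/2) (by linarith : (0:ℝ) ≤ a-(1-x)/2), sq_nonneg (3*x-1)]
      · rw [max_eq_left (by linarith : 2*a-1-x ≤ (0:ℝ))] at hL
        nlinarith [sq_nonneg (a-2/3)]
    · rw [max_eq_right (by linarith : (0:ℝ) ≤ x-(3*a-1))] at hL
      have h1 : a ≤ (1+x)/3 := by linarith
      have h2 : 1-x ≤ a := by linarith
      nlinarith [le_max_left (0:ℝ) (2*a-1-x)]


theorem max_sigma_sq (x : ℝ) (hx : x ∈ Icc (0:ℝ) (1/2)) :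
    IsGreatest
      ((fun a : ℝ => a * (1 - a) + (1 - a) * (3 * a - 1) / 3 -
          (1/3) * ∫ t in (0:ℝ)..1, (if t ∈ Icc (0:ℝ) (1 - a) then (1:ℝ) else 0) *
            (if Int.fract (x - t) ≤ 3 * a - 1 then (1:ℝ) else 0)) '' Icc (1/3 : ℝ) (2/3))
      (if x ≤ 1/6 then (-3 * x ^ 2 - x + 2) / 6
        else if x ≤ 3/8 then (-24 * x + 25) / 72
        else 2/9) := by
  obtain ⟨hx0, hx2⟩ := hx
  constructor
  · -- membership
    by_cases h6 : x ≤ 1/6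
    · refine ⟨(1+x)/2, ⟨by linarith, by linarith⟩, ?_⟩
      have hI : (∫ t in (0:ℝ)..1, Fxa x ((1+x)/2) t) = x :=
        integral_value x ((1+x)/2) hx0 hx2 (by linarith) (by linarith)
          (by linarith) (by linarith) (by linarith)
      show (1+x)/2 * (1 - (1+x)/2) + (1 - (1+x)/2) * (3 * ((1+x)/2) - 1) / 3 -
          (1/3) * (∫ t in (0:ℝ)..1, Fxa x ((1+x)/2) t) = _
      rw [hI, if_pos h6]
      ring
    · by_cases h38 : x ≤ 3/8
      · refine ⟨7/12, ⟨by norm_num, by norm_num⟩, ?_⟩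
        have hI : (∫ t in (0:ℝ)..1, Fxa x (7/12) t) = x :=
          integral_value x (7/12) hx0 hx2 (by norm_num) (by norm_num)
            (by push_neg at h6; linarith) (by linarith) (by push_neg at h6; linarith)
        show (7:ℝ)/12 * (1 - 7/12) + (1 - 7/12) * (3 * (7/12) - 1) / 3 -
            (1/3) * (∫ t in (0:ℝ)..1, Fxa x (7/12) t) = _
        rw [hI, if_neg h6, if_pos h38]
        ring
      · refine ⟨1/3, ⟨le_refl _, by norm_num⟩, ?_⟩
        have hI : (∫ t in (0:ℝ)..1, Fxa x (1/3) t) = 0 := integral_value0 x hx0 hx2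
        show (1:ℝ)/3 * (1 - 1/3) + (1 - 1/3) * (3 * (1/3) - 1) / 3 -
            (1/3) * (∫ t in (0:ℝ)..1, Fxa x (1/3) t) = _
        rw [hI, if_neg h6, if_neg h38]
        norm_num
  · -- upper bound
    rintro y ⟨a, ⟨ha1, ha2⟩, rfl⟩
    have hI : min x (1-a) - max 0 (x - (3*a-1)) + max 0 ((2*a-1) - x)
        ≤ ∫ t in (0:ℝ)..1, Fxa x a t := integral_lower x a hx0 hx2 ha1 ha2
    show a * (1 - a) + (1 - a) * (3 * a - 1) / 3 -
        (1/3) * (∫ t in (0:ℝ)..1, Fxa x a t) ≤ _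
    split_ifs with h6 h38
    · exact upper1 x a _ hx0 h6 ha1 ha2 hI
    · exact upper2 x a _ (by push_neg at h6; linarith) h38 ha1 ha2 hI
    · exact upper3 x a _ (by push_neg at h38; linarith) hx2 ha1 ha2 hI
end

section
/- Let x_1, ..., x_N ∈ [0,1] and define x̄_k = x_k if x_k ≤ 1/2 and x̄_k = 1 - x_k if x_k > 1/2. Then the star-discrepancy of the points 2x̄_1, ..., 2x̄_N is at most the extremal discrepancy of x_1, ..., x_N; that is, sup_{0≤a≤1} |(1/N) Σ_{k=1}^N 1_{[1-a,1]}(2x̄_k) - a| ≤ D_N(x_1, ..., x_N). -/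
open MeasureTheory Set

theorem folding_discrepancy {N : ℕ} (hN : 0 < N) (x : Fin N → ℝ)
    (hx : ∀ k, x k ∈ Icc (0:ℝ) 1) :
    (⨆ a : Icc (0:ℝ) 1,
        |(∑ k, if 2 * (if x k ≤ 1/2 then x k else 1 - x k) ∈ Icc (1 - (a:ℝ)) 1
            then (1:ℝ) else 0) / N - (a:ℝ)|)
      ≤ discrepancy x := by
  have hbdd : BddAbove (Set.range fun p : {p : ℝ × ℝ // 0 ≤ p.1 ∧ p.1 ≤ p.2 ∧ p.2 ≤ 1} =>
      |(∑ k, if x k ∈ Icc p.val.1 p.val.2 then (1:ℝ) else 0) / N - (p.val.2 - p.val.1)|) := by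
    refine ⟨2, ?_⟩
    rintro y ⟨p, rfl⟩
    obtain ⟨h1, h2, h3⟩ := p.2
    have hS0 : (0:ℝ) ≤ ∑ k, if x k ∈ Icc p.val.1 p.val.2 then (1:ℝ) else 0 :=
      Finset.sum_nonneg fun k _ => by positivity
    have hSN : (∑ k, if x k ∈ Icc p.val.1 p.val.2 then (1:ℝ) else 0) ≤ N := by
      calc (∑ k, if x k ∈ Icc p.val.1 p.val.2 then (1:ℝ) else 0)
          ≤ ∑ _k : Fin N, (1:ℝ) := Finset.sum_le_sum fun k _ => by split <;> norm_num
        _ = N := by simp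
    have hNpos : (0:ℝ) < N := Nat.cast_pos.mpr hN
    have hdiv0 : (0:ℝ) ≤ (∑ k, if x k ∈ Icc p.val.1 p.val.2 then (1:ℝ) else 0) / N :=
      div_nonneg hS0 hNpos.le
    have hdiv1 : (∑ k, if x k ∈ Icc p.val.1 p.val.2 then (1:ℝ) else 0) / N ≤ 1 :=
      (div_le_one hNpos).mpr hSN
    rw [abs_le]; constructor <;> linarith
  refine ciSup_le fun a => ?_
  obtain ⟨ha0, ha1⟩ := a.2
  set p : {p : ℝ × ℝ // 0 ≤ p.1 ∧ p.1 ≤ p.2 ∧ p.2 ≤ 1} :=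
    ⟨(1/2 - (a:ℝ)/2, 1/2 + (a:ℝ)/2), ⟨by linarith, by linarith, by linarith⟩⟩
  have key : (∑ k, if 2 * (if x k ≤ 1/2 then x k else 1 - x k) ∈ Icc (1 - (a:ℝ)) 1
            then (1:ℝ) else 0)
      = ∑ k, if x k ∈ Icc p.val.1 p.val.2 then (1:ℝ) else 0 := by
    refine Finset.sum_congr rfl fun k _ => ?_
    obtain ⟨hk0, hk1⟩ := hx k
    congr 1
    simp only [p, Set.mem_Icc]
    rw [eq_iff_iff]
    by_cases h : x k ≤ 1/2 <;> simp only [h, if_true, if_false] <;> (try push_neg at h) <;>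
      constructor <;> rintro ⟨u, v⟩ <;> exact ⟨by linarith, by linarith⟩
  calc |(∑ k, if 2 * (if x k ≤ 1/2 then x k else 1 - x k) ∈ Icc (1 - (a:ℝ)) 1
            then (1:ℝ) else 0) / N - (a:ℝ)|
      = |(∑ k, if x k ∈ Icc p.val.1 p.val.2 then (1:ℝ) else 0) / N
          - (p.val.2 - p.val.1)| := by rw [key]; simp only [p]; ring_nf
    _ ≤ discrepancy x := le_ciSup hbdd p
end
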